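/- The map sending a Dyck path π of size n to the graph with vertex set [n] and edge set Area(π) is a bijection from the set of Dyck paths of size n to the set of indifference graphs on [n]. -/

import Mathlib

/-- An indifference graph on `[n]`: for every edge `{i,l}` with `i < l`, every pair
`{j,k}` with `i ≤ j < k ≤ l` is also an edge. -/
def IsIndiff {n : ℕ} (G : SimpleGraph (Fin n)) : Prop :=
  ∀ i l : Fin n, i < l → G.Adj i l →
    ∀ j k : Fin n, i ≤ j → j < k → k ≤ l → G.Adj j k

/-- A Dyck path of size `n`, encoded as a list of booleans (`true` = east step `E`,
`false` = south step `S`): it has `2n` steps, `n` east steps, and never goes below the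
diagonal (every prefix has at least as many `E`'s as `S`'s). -/
def IsDyck (n : ℕ) (l : List Bool) : Prop :=
  l.length = 2 * n ∧ l.count true = n ∧
    ∀ m, (l.take m).count false ≤ (l.take m).count true

/-- The unit square labelled `{i,j}` (`1 ≤ i < j ≤ n`, one-based) lies below the path:
equivalently, the `j`-th east step occurs strictly before the `i`-th south step. -/
def dyckBelow (l : List Bool) (i j : ℕ) : Prop :=
  j ≤ (l.take (i + j - 1)).count true

/-- The graph `Graph(π) = ([n], Area(π))` of a Dyck path. -/
def graphOf (n : ℕ) (l : List Bool) : SimpleGraph (Fin n) :=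
  SimpleGraph.fromRel (fun i j => i < j ∧ dyckBelow l ((i : ℕ) + 1) ((j : ℕ) + 1))

/-! ### Auxiliary lemmas about prefix counts -/

lemma cnt_mono (l : List Bool) {m m' : ℕ} (h : m ≤ m') :
    (l.take m).count true ≤ (l.take m').count true := by
  have h1 : l.take m = (l.take m').take m := by rw [List.take_take, Nat.min_eq_left h]
  rw [h1]; exact (List.take_sublist _ _).count_le _

lemma cnt_lip (l : List Bool) {m m' : ℕ} (h : m ≤ m') :
    (l.take m').count true ≤ (l.take m).count true + (m' - m) := by
  have h1 : l.take m' = l.take m ++ (l.drop m).take (m' - m) := by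
    rw [← List.take_add]; congr 1; omega
  rw [h1, List.count_append]
  have h2 : ((l.drop m).take (m' - m)).count true ≤ ((l.drop m).take (m' - m)).length :=
    List.count_le_length
  have h3 : ((l.drop m).take (m' - m)).length ≤ m' - m := by simp
  omega

lemma cnt_le (l : List Bool) (m : ℕ) : (l.take m).count true ≤ m := by
  calc (l.take m).count true ≤ (l.take m).length := List.count_le_length
  _ ≤ m := by simp

lemma cnt_le_total (l : List Bool) (m : ℕ) :
    (l.take m).count true ≤ l.count true :=
  (List.take_sublist _ _).count_le _

lemma cnt_add (l : List Bool) : l.count true + l.count false = l.length := by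
  induction l with
  | nil => simp
  | cons a t ih => cases a <;> simp [List.count_cons] <;> omega

lemma eq_of_cnt : ∀ (l l' : List Bool), l.length = l'.length →
    (∀ m, (l.take m).count true = (l'.take m).count true) → l = l' := by
  intro l
  induction l with
  | nil =>
    intro l' hlen _
    cases l' with
    | nil => rfl
    | cons a t => simp at hlen
  | cons a t ih =>
    intro l' hlen h
    cases l' with
    | nil => simp at hlen
    | cons a' t' =>
      have h1 := h 1
      simp [List.count_cons] at h1
      have ha : a = a' := by cases a <;> cases a' <;> simp_all
      subst ha
      have ht : t = t' := by
        apply ih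
        · simpa using hlen
        · intro m
          have h2 := h (m + 1)
          simp only [List.take_succ_cons, List.count_cons] at h2
          omega
      rw [ht]

/-- Characterization of adjacency in `graphOf` for `a < b`. -/
lemma graphOf_adj {n : ℕ} (l : List Bool) (a b : Fin n) (hab : a < b) :
    (graphOf n l).Adj a b ↔ (b : ℕ) + 1 ≤ (l.take ((a : ℕ) + (b : ℕ) + 1)).count true := by
  have harg : ((a : ℕ) + 1) + ((b : ℕ) + 1) - 1 = (a : ℕ) + (b : ℕ) + 1 := by omega
  unfold graphOf
  rw [SimpleGraph.fromRel_adj]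
  constructor
  · rintro ⟨_, (⟨_, hb⟩ | ⟨hba, _⟩)⟩
    · unfold dyckBelow at hb; rwa [harg] at hb
    · exact absurd hba (not_lt.2 hab.le)
  · intro hb
    refine ⟨hab.ne, Or.inl ⟨hab, ?_⟩⟩
    unfold dyckBelow; rwa [harg]

/-! ### The inverse construction: from an indifference graph to a Dyck path -/

open Classical in
/-- The height of the path of `G` after `m` steps. -/
noncomputable def dVal (n : ℕ) (G : SimpleGraph (Fin n)) (m : ℕ) : ℕ :=
  max ((m + 1) / 2)
    (Finset.univ.sup fun p : Fin n × Fin n =>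
      if p.1 < p.2 ∧ G.Adj p.1 p.2 ∧ (p.1 : ℕ) + (p.2 : ℕ) + 1 = m then (p.2 : ℕ) + 1 else 0)

lemma dVal_le {n : ℕ} (G : SimpleGraph (Fin n)) {m : ℕ} (hm : m ≤ 2 * n) :
    dVal n G m ≤ n := by
  unfold dVal
  apply max_le
  · omega
  · apply Finset.sup_le
    intro p _
    split
    · exact p.2.isLt
    · exact Nat.zero_le _

lemma dVal_ge {n : ℕ} (G : SimpleGraph (Fin n)) (m : ℕ) : (m + 1) / 2 ≤ dVal n G m :=
  le_max_left _ _

open Classical in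
lemma le_dValSup {n : ℕ} (G : SimpleGraph (Fin n)) (m : ℕ) (a b : Fin n) (hab : a < b)
    (hadj : G.Adj a b) (hd : (a : ℕ) + (b : ℕ) + 1 = m) :
    (b : ℕ) + 1 ≤ Finset.univ.sup fun p : Fin n × Fin n =>
      if p.1 < p.2 ∧ G.Adj p.1 p.2 ∧ (p.1 : ℕ) + (p.2 : ℕ) + 1 = m
      then (p.2 : ℕ) + 1 else 0 := by
  have h := Finset.le_sup (f := fun p : Fin n × Fin n =>
      if p.1 < p.2 ∧ G.Adj p.1 p.2 ∧ (p.1 : ℕ) + (p.2 : ℕ) + 1 = m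
      then (p.2 : ℕ) + 1 else 0) (Finset.mem_univ (a, b))
  simpa [hab, hadj, hd] using h

lemma dVal_ge_of_adj' {n : ℕ} (G : SimpleGraph (Fin n)) (m : ℕ) (a b : Fin n) (hab : a < b)
    (hadj : G.Adj a b) (hd : (a : ℕ) + (b : ℕ) + 1 = m) : (b : ℕ) + 1 ≤ dVal n G m :=
  le_trans (le_dValSup G m a b hab hadj hd) (le_max_right _ _)

lemma adj_of_dVal {n : ℕ} {G : SimpleGraph (Fin n)} (hG : IsIndiff G) (a b : Fin n)
    (hab : a < b) (h : (b : ℕ) + 1 ≤ dVal n G ((a : ℕ) + (b : ℕ) + 1)) : G.Adj a b := by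
  classical
  have habn : (a : ℕ) < b := Fin.lt_def.mp hab
  have hsup : (b : ℕ) < Finset.univ.sup fun p : Fin n × Fin n =>
      if p.1 < p.2 ∧ G.Adj p.1 p.2 ∧ (p.1 : ℕ) + (p.2 : ℕ) + 1 = (a : ℕ) + (b : ℕ) + 1
      then (p.2 : ℕ) + 1 else 0 := by
    unfold dVal at h
    rcases le_max_iff.mp h with h1 | h1
    · omega
    · omega
  obtain ⟨p, _, hp⟩ := Finset.lt_sup_iff.mp hsup
  by_cases hc : p.1 < p.2 ∧ G.Adj p.1 p.2 ∧ (p.1 : ℕ) + (p.2 : ℕ) + 1 = (a : ℕ) + (b : ℕ) + 1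
  · obtain ⟨hp12, hadj, hdiag⟩ := hc
    rw [if_pos ⟨hp12, hadj, hdiag⟩] at hp
    have hb2 : (b : ℕ) ≤ (p.2 : ℕ) := by omega
    have ha1 : (p.1 : ℕ) ≤ (a : ℕ) := by omega
    exact hG p.1 p.2 hp12 hadj a b (Fin.le_def.mpr ha1) hab (Fin.le_def.mpr hb2)
  · rw [if_neg hc] at hp; omega

lemma dVal_mono {n : ℕ} {G : SimpleGraph (Fin n)} (hG : IsIndiff G) (m : ℕ) :
    dVal n G m ≤ dVal n G (m + 1) := by
  classical
  apply max_le
  · exact le_trans (by omega) (dVal_ge G (m + 1))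
  · apply Finset.sup_le
    intro p _
    split
    · next hc =>
      obtain ⟨hp12, hadj, hdiag⟩ := hc
      have hp12n : (p.1 : ℕ) < (p.2 : ℕ) := Fin.lt_def.mp hp12
      by_cases hcase : (p.1 : ℕ) + 1 < (p.2 : ℕ)
      · have hlt : (p.1 : ℕ) + 1 < n := lt_trans hcase p.2.isLt
        have hqp2 : (⟨(p.1 : ℕ) + 1, hlt⟩ : Fin n) < p.2 := Fin.lt_def.mpr hcase
        have hadj' : G.Adj ⟨(p.1 : ℕ) + 1, hlt⟩ p.2 :=
          hG p.1 p.2 hp12 hadj _ p.2 (Fin.le_def.mpr (Nat.le_succ _)) hqp2 le_rfl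
        exact dVal_ge_of_adj' G (m + 1) _ p.2 hqp2 hadj'
          (by show (p.1 : ℕ) + 1 + (p.2 : ℕ) + 1 = m + 1; omega)
      · have heq : (p.2 : ℕ) + 1 = (m + 1 + 1) / 2 := by omega
        rw [heq]; exact dVal_ge G (m + 1)
    · exact Nat.zero_le _

lemma dVal_lip {n : ℕ} {G : SimpleGraph (Fin n)} (hG : IsIndiff G) (m : ℕ) :
    dVal n G (m + 1) ≤ dVal n G m + 1 := by
  classical
  apply max_le
  · have := dVal_ge G m; omega
  · apply Finset.sup_le
    intro p _
    split
    · next hc =>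
      obtain ⟨hp12, hadj, hdiag⟩ := hc
      have hp12n : (p.1 : ℕ) < (p.2 : ℕ) := Fin.lt_def.mp hp12
      by_cases hcase : (p.1 : ℕ) + 1 < (p.2 : ℕ)
      · have hlt : (p.2 : ℕ) - 1 < n := lt_of_le_of_lt (by omega) p.2.isLt
        have hpq : p.1 < (⟨(p.2 : ℕ) - 1, hlt⟩ : Fin n) := Fin.lt_def.mpr (by
          show (p.1 : ℕ) < (p.2 : ℕ) - 1; omega)
        have hadj' : G.Adj p.1 ⟨(p.2 : ℕ) - 1, hlt⟩ :=
          hG p.1 p.2 hp12 hadj p.1 _ le_rfl hpq (Fin.le_def.mpr (by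
            show (p.2 : ℕ) - 1 ≤ (p.2 : ℕ); omega))
        have h1 : (p.2 : ℕ) - 1 + 1 ≤ dVal n G m :=
          dVal_ge_of_adj' G m p.1 _ hpq hadj'
            (by show (p.1 : ℕ) + ((p.2 : ℕ) - 1) + 1 = m; omega)
        omega
      · have h1 : (p.2 : ℕ) = (m + 1) / 2 := by omega
        have := dVal_ge G m
        omega
    · exact Nat.zero_le _

lemma dVal_zero {n : ℕ} (G : SimpleGraph (Fin n)) : dVal n G 0 = 0 := by
  classical
  refine Nat.le_antisymm ?_ (Nat.zero_le _)
  unfold dVal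
  apply max_le
  · omega
  · apply Finset.sup_le
    intro p _
    split
    · next hc => exact absurd hc.2.2 (by omega)
    · exact le_rfl

lemma dVal_final {n : ℕ} (G : SimpleGraph (Fin n)) : dVal n G (2 * n) = n := by
  have h1 := dVal_le G (le_refl (2 * n))
  have h2 := dVal_ge G (2 * n)
  omega

/-- The Dyck path associated to an indifference graph. -/
noncomputable def dList (n : ℕ) (G : SimpleGraph (Fin n)) : List Bool :=
  (List.range (2 * n)).map fun m => decide (dVal n G m < dVal n G (m + 1))

lemma dList_length {n : ℕ} (G : SimpleGraph (Fin n)) : (dList n G).length = 2 * n := by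
  simp [dList]

lemma dList_take {n : ℕ} (G : SimpleGraph (Fin n)) {m : ℕ} (hm : m ≤ 2 * n) :
    (dList n G).take m =
      (List.range m).map fun k => decide (dVal n G k < dVal n G (k + 1)) := by
  unfold dList
  rw [← List.map_take, List.take_range, Nat.min_eq_left hm]

lemma dList_cnt {n : ℕ} {G : SimpleGraph (Fin n)} (hG : IsIndiff G) :
    ∀ m, m ≤ 2 * n → ((dList n G).take m).count true = dVal n G m := by
  intro m
  induction m with
  | zero => intro _; simp [dVal_zero]
  | succ m ih =>
    intro hm
    have hm' : m ≤ 2 * n := by omega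
    rw [dList_take G hm, List.range_succ, List.map_append, List.count_append]
    rw [dList_take G hm'] at ih
    have hmono := dVal_mono hG m
    have hlip := dVal_lip hG m
    by_cases hc : dVal n G m < dVal n G (m + 1)
    · simp [hc, ih hm']
      omega
    · simp [hc, ih hm']
      omega

lemma dList_dyck {n : ℕ} {G : SimpleGraph (Fin n)} (hG : IsIndiff G) :
    IsDyck n (dList n G) := by
  have hlen := dList_length G
  have hcnt : (dList n G).count true = n := by
    have h1 : (dList n G).take (2 * n) = dList n G := by
      rw [List.take_of_length_le (le_of_eq hlen)]
    have h2 := dList_cnt hG (2 * n) le_rfl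
    rw [h1, dVal_final] at h2
    exact h2
  refine ⟨hlen, hcnt, ?_⟩
  intro m
  have h4 := cnt_add ((dList n G).take m)
  by_cases hm : m ≤ 2 * n
  · have h1 := dList_cnt hG m hm
    have h2 := dVal_ge G m
    have h3 : ((dList n G).take m).length = m := by
      rw [List.length_take, hlen]; omega
    omega
  · have h1 : (dList n G).take m = dList n G := List.take_of_length_le (by omega)
    rw [h1] at h4 ⊢
    omega

lemma dList_graphOf {n : ℕ} {G : SimpleGraph (Fin n)} (hG : IsIndiff G) :
    graphOf n (dList n G) = G := by
  have key : ∀ a b : Fin n, a < b → ((graphOf n (dList n G)).Adj a b ↔ G.Adj a b) := by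
    intro a b hab
    have habn : (a : ℕ) < (b : ℕ) := Fin.lt_def.mp hab
    have harg : (a : ℕ) + (b : ℕ) + 1 ≤ 2 * n := by
      have := a.isLt; have := b.isLt; omega
    rw [graphOf_adj _ _ _ hab, dList_cnt hG _ harg]
    constructor
    · exact adj_of_dVal hG a b hab
    · exact fun h => dVal_ge_of_adj' G _ a b hab h rfl
  ext a b
  rcases lt_trichotomy a b with h | h | h
  · exact key a b h
  · subst h; simp
  · have hk := key b a h
    exact ⟨fun hx => (hk.mp hx.symm).symm, fun hx => (hk.mpr hx.symm).symm⟩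

/-! ### Injectivity -/

lemma cnt_le_of_graph_eq {n : ℕ} {p q : List Bool} (hp : IsDyck n p) (hq : IsDyck n q)
    (hpq : graphOf n p = graphOf n q) (m : ℕ) :
    (p.take m).count true ≤ (q.take m).count true := by
  obtain ⟨hplen, hpcnt, hppre⟩ := hp
  obtain ⟨hqlen, hqcnt, hqpre⟩ := hq
  set v := (p.take m).count true with hv
  have hvle : v ≤ n := hpcnt ▸ cnt_le_total p m
  have hvm : v ≤ m := cnt_le p m
  have hpf := cnt_add (p.take m)
  have hpl : (p.take m).length = min m (2 * n) := by rw [List.length_take, hplen]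
  have hqf := cnt_add (q.take m)
  have hql : (q.take m).length = min m (2 * n) := by rw [List.length_take, hqlen]
  have hppre' := hppre m
  have hqpre' := hqpre m
  by_cases hcase : 2 * v ≤ min m (2 * n) + 1
  · omega
  · -- 2 * v ≥ min m (2n) + 2; since v ≤ n we get m < 2n and 2v ≥ m + 2
    have hmlt : m < 2 * n := by omega
    have h2v : m + 2 ≤ 2 * v := by omega
    have hv1 : 1 ≤ v := by omega
    have hbn : v - 1 < n := by omega
    have han : m - v < n := by omega
    set a : Fin n := ⟨m - v, han⟩ with hadef
    set b : Fin n := ⟨v - 1, hbn⟩ with hbdef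
    have hab : a < b := Fin.lt_def.mpr (by show m - v < v - 1; omega)
    have hdiag : (a : ℕ) + (b : ℕ) + 1 = m := by show m - v + (v - 1) + 1 = m; omega
    have hbv : (b : ℕ) + 1 = v := by show v - 1 + 1 = v; omega
    have hadj : (graphOf n p).Adj a b := by
      rw [graphOf_adj _ _ _ hab, hdiag]
      omega
    rw [hpq, graphOf_adj _ _ _ hab, hdiag] at hadj
    omega

/-! ### The main theorem -/

/-- The map `π ↦ Graph(π) = ([n], Area(π))` is a bijection from Dyck paths of size `n`
to indifference graphs on `[n]`. -/
theorem dyck_to_indifference_bijective (n : ℕ) :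
    Set.BijOn (graphOf n) {l : List Bool | IsDyck n l}
      {G : SimpleGraph (Fin n) | IsIndiff G} := by
  refine ⟨?_, ?_, ?_⟩
  · -- MapsTo
    intro l hl
    simp only [Set.mem_setOf_eq] at hl ⊢
    intro a b hab hadj j k hj hjk hk
    have habn : (a : ℕ) < (b : ℕ) := Fin.lt_def.mp hab
    have hjkn : (j : ℕ) < (k : ℕ) := Fin.lt_def.mp hjk
    have hjn : (a : ℕ) ≤ (j : ℕ) := Fin.le_def.mp hj
    have hkn : (k : ℕ) ≤ (b : ℕ) := Fin.le_def.mp hk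
    rw [graphOf_adj _ _ _ hab] at hadj
    rw [graphOf_adj _ _ _ hjk]
    rcases le_or_gt ((j : ℕ) + (k : ℕ) + 1) ((a : ℕ) + (b : ℕ) + 1) with h | h
    · have := cnt_lip l h
      omega
    · have := cnt_mono l (le_of_lt h)
      omega
  · -- InjOn
    intro p hp q hq hpq
    simp only [Set.mem_setOf_eq] at hp hq
    apply eq_of_cnt
    · rw [hp.1, hq.1]
    · intro m
      exact le_antisymm (cnt_le_of_graph_eq hp hq hpq m)
        (cnt_le_of_graph_eq hq hp hpq.symm m)
  · -- SurjOn
    intro G hG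
    simp only [Set.mem_setOf_eq] at hG
    exact ⟨dList n G, dList_dyck hG, dList_graphOf hG⟩
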